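/- Let P be a finite nonempty set of points in ℝ^d, let α > 0, and let p, q ≥ 1 be integers. If r is a constrained-feasible radius, then there exists a feasible solution with covering radius r, all of whose red and blue centers lie on ℓ, such that the first coordinate of every center can be written as e + t·α for some endpoint e ∈ E(r) and some nonnegative integer t. -/

import Mathlib

/-- A point of `ℝ^d` lies on the line `ℓ` (the x-axis) iff all coordinates other than the
first vanish. -/
def OnAxis {d : ℕ} (x : EuclideanSpace ℝ (Fin d)) : Prop :=
  ∀ j : Fin d, (j : ℕ) ≠ 0 → x j = 0

/-- The distance `d_i = sqrt(p_{i2}² + … + p_{id}²)` of a point of `ℝ^d` from the x-axis. -/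
noncomputable def distToAxis {d : ℕ} (p : EuclideanSpace ℝ (Fin d)) : ℝ :=
  Real.sqrt (∑ j ∈ Finset.univ.filter (fun j : Fin d => (j : ℕ) ≠ 0), (p j) ^ 2)

/-- The left endpoint `aᵢ(r) = p_{i1} − sqrt(r² − dᵢ²)`. -/
noncomputable def aEnd {d : ℕ} (hd : 0 < d) (p : EuclideanSpace ℝ (Fin d)) (r : ℝ) : ℝ :=
  p ⟨0, hd⟩ - Real.sqrt (r ^ 2 - distToAxis p ^ 2)

/-- The right endpoint `bᵢ(r) = p_{i1} + sqrt(r² − dᵢ²)`. -/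
noncomputable def bEnd {d : ℕ} (hd : 0 < d) (p : EuclideanSpace ℝ (Fin d)) (r : ℝ) : ℝ :=
  p ⟨0, hd⟩ + Real.sqrt (r ^ 2 - distToAxis p ^ 2)

/-- `E(r)`: the set of all endpoints `aᵢ(r)`, `bᵢ(r)` over points `pᵢ` with `dᵢ ≤ r`. -/
def Endpoints {d n : ℕ} (hd : 0 < d) (pts : Fin n → EuclideanSpace ℝ (Fin d))
    (r : ℝ) : Set ℝ :=
  {e | ∃ i : Fin n, distToAxis (pts i) ≤ r ∧
    (e = aEnd hd (pts i) r ∨ e = bEnd hd (pts i) r)}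

/-- A feasible solution of the `(p ∧ q, α)` problem on the point set `{pts i}` with
covering radius `r`, all of whose centers lie on the x-axis. -/
def ConstrainedFeasible {d n : ℕ} (pts : Fin n → EuclideanSpace ℝ (Fin d))
    (α : ℝ) (p q : ℕ) (r : ℝ) : Prop :=
  ∃ (c : Fin p → EuclideanSpace ℝ (Fin d)) (e : Fin q → EuclideanSpace ℝ (Fin d)),
    (∀ i, OnAxis (c i)) ∧ (∀ j, OnAxis (e j)) ∧
    (∀ k : Fin n, ∃ i, dist (pts k) (c i) ≤ r) ∧
    (∀ k : Fin n, ∃ j, dist (pts k) (e j) ≤ r) ∧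
    (∀ i j, α ≤ dist (c i) (e j))


lemma distToAxis_nonneg {d : ℕ} (p : EuclideanSpace ℝ (Fin d)) : 0 ≤ distToAxis p :=
  Real.sqrt_nonneg _

lemma distToAxis_sq {d : ℕ} (p : EuclideanSpace ℝ (Fin d)) :
    distToAxis p ^ 2 = ∑ j ∈ Finset.univ.filter (fun j : Fin d => (j : ℕ) ≠ 0), (p j) ^ 2 :=
  Real.sq_sqrt (Finset.sum_nonneg fun _ _ => sq_nonneg _)

lemma dist_sq_onAxis {d : ℕ} (hd : 0 < d) (P x : EuclideanSpace ℝ (Fin d)) (hx : OnAxis x) :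
    dist P x ^ 2 = (P ⟨0, hd⟩ - x ⟨0, hd⟩) ^ 2 + distToAxis P ^ 2 := by
  have h1 : dist P x = Real.sqrt (∑ j, (P j - x j) ^ 2) := by
    rw [EuclideanSpace.dist_eq]
    congr 1
    exact Finset.sum_congr rfl fun j _ => by rw [Real.dist_eq, sq_abs]
  rw [h1, Real.sq_sqrt (Finset.sum_nonneg fun _ _ => sq_nonneg _), distToAxis_sq]
  rw [← Finset.sum_filter_add_sum_filter_not Finset.univ (fun j : Fin d => (j : ℕ) = 0)]
  congr 1
  · have : Finset.univ.filter (fun j : Fin d => (j : ℕ) = 0) = {⟨0, hd⟩} := by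
      ext j
      simp [Fin.ext_iff]
    rw [this, Finset.sum_singleton]
  · exact Finset.sum_congr rfl fun j hj => by
      rw [hx j (by simpa using hj), sub_zero]

lemma cover_forward {d : ℕ} (hd : 0 < d) {P x : EuclideanSpace ℝ (Fin d)} {r : ℝ}
    (hx : OnAxis x) (h : dist P x ≤ r) :
    distToAxis P ≤ r ∧ aEnd hd P r ≤ x ⟨0, hd⟩ ∧ x ⟨0, hd⟩ ≤ bEnd hd P r := by
  have hr0 : 0 ≤ r := le_trans dist_nonneg h
  have hsq : dist P x ^ 2 ≤ r ^ 2 := pow_le_pow_left₀ dist_nonneg h 2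
  rw [dist_sq_onAxis hd P x hx] at hsq
  have hd2 : distToAxis P ^ 2 ≤ r ^ 2 := by nlinarith [sq_nonneg (P ⟨0, hd⟩ - x ⟨0, hd⟩)]
  have h1 : distToAxis P ≤ r := by
    have := Real.sqrt_le_sqrt hd2
    rwa [Real.sqrt_sq (distToAxis_nonneg P), Real.sqrt_sq hr0] at this
  refine ⟨h1, ?_, ?_⟩ <;>
  · have h2 : (x ⟨0, hd⟩ - P ⟨0, hd⟩) ^ 2 ≤ r ^ 2 - distToAxis P ^ 2 := by nlinarith
    have h3 : |x ⟨0, hd⟩ - P ⟨0, hd⟩| ≤ Real.sqrt (r ^ 2 - distToAxis P ^ 2) := by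
      have := Real.sqrt_le_sqrt h2
      rwa [Real.sqrt_sq_eq_abs] at this
    rw [abs_le] at h3
    simp only [aEnd, bEnd]
    linarith [h3.1, h3.2]

lemma cover_backward {d : ℕ} (hd : 0 < d) {P x : EuclideanSpace ℝ (Fin d)} {r : ℝ}
    (hx : OnAxis x) (hr : 0 ≤ r) (h1 : distToAxis P ≤ r)
    (h2 : aEnd hd P r ≤ x ⟨0, hd⟩) (h3 : x ⟨0, hd⟩ ≤ bEnd hd P r) : dist P x ≤ r := by
  have hge : 0 ≤ r ^ 2 - distToAxis P ^ 2 := by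
    nlinarith [distToAxis_nonneg P]
  have hs : Real.sqrt (r ^ 2 - distToAxis P ^ 2) ^ 2 = r ^ 2 - distToAxis P ^ 2 :=
    Real.sq_sqrt hge
  simp only [aEnd, bEnd] at h2 h3
  have habs : (P ⟨0, hd⟩ - x ⟨0, hd⟩) ^ 2 ≤ r ^ 2 - distToAxis P ^ 2 := by nlinarith
  have hdsq : dist P x ^ 2 ≤ r ^ 2 := by
    rw [dist_sq_onAxis hd P x hx]; linarith
  have := Real.sqrt_le_sqrt hdsq
  rwa [Real.sqrt_sq dist_nonneg, Real.sqrt_sq hr] at this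

lemma distToAxis_onAxis {d : ℕ} {x : EuclideanSpace ℝ (Fin d)} (hx : OnAxis x) :
    distToAxis x = 0 := by
  unfold distToAxis
  rw [Finset.sum_eq_zero fun j hj => by rw [hx j (by simpa using hj)]; ring]
  simp

lemma dist_onAxis_eq {d : ℕ} (hd : 0 < d) {x y : EuclideanSpace ℝ (Fin d)}
    (hx : OnAxis x) (hy : OnAxis y) : dist x y = |x ⟨0, hd⟩ - y ⟨0, hd⟩| := by
  have h := dist_sq_onAxis hd x y hy
  rw [distToAxis_onAxis hx] at h
  have : dist x y = Real.sqrt (dist x y ^ 2) := (Real.sqrt_sq dist_nonneg).symm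
  rw [this, h]
  simp [Real.sqrt_sq_eq_abs]

def axisPt (d : ℕ) (x : ℝ) : EuclideanSpace ℝ (Fin d) :=
  WithLp.toLp 2 (fun j => if (j : ℕ) = 0 then x else 0)

lemma axisPt_onAxis {d : ℕ} (x : ℝ) : OnAxis (axisPt d x) :=
  fun _ hj => if_neg hj

lemma axisPt_zero {d : ℕ} (hd : 0 < d) (x : ℝ) : axisPt d x ⟨0, hd⟩ = x :=
  (if_pos rfl : (if ((⟨0, hd⟩ : Fin d) : ℕ) = 0 then x else 0) = x)

noncomputable def snap {d n : ℕ} (hd : 0 < d) (pts : Fin n → EuclideanSpace ℝ (Fin d))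
    (r α x : ℝ) : ℝ :=
  if h : (Finset.univ.filter (fun k : Fin n => aEnd hd (pts k) r ≤ x)).Nonempty
  then (Finset.univ.filter (fun k : Fin n => aEnd hd (pts k) r ≤ x)).sup' h
        (fun k => aEnd hd (pts k) r + (⌊(x - aEnd hd (pts k) r) / α⌋₊ : ℝ) * α)
  else x

lemma snap_le {d n : ℕ} (hd : 0 < d) (pts : Fin n → EuclideanSpace ℝ (Fin d))
    {r α x : ℝ} (hα : 0 < α) : snap hd pts r α x ≤ x := by
  unfold snap
  split
  · next h =>
    apply Finset.sup'_le
    intro k hk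
    rw [Finset.mem_filter] at hk
    have hnn : 0 ≤ (x - aEnd hd (pts k) r) / α := div_nonneg (by linarith [hk.2]) hα.le
    have := Nat.floor_le hnn
    have h2 : (⌊(x - aEnd hd (pts k) r) / α⌋₊ : ℝ) * α ≤ x - aEnd hd (pts k) r := by
      calc (⌊(x - aEnd hd (pts k) r) / α⌋₊ : ℝ) * α ≤ ((x - aEnd hd (pts k) r) / α) * α :=
            mul_le_mul_of_nonneg_right this hα.le
        _ = x - aEnd hd (pts k) r := div_mul_cancel₀ _ hα.ne'
    linarith
  · exact le_rfl

lemma le_snap {d n : ℕ} (hd : 0 < d) (pts : Fin n → EuclideanSpace ℝ (Fin d))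
    {r α x : ℝ} (hα : 0 < α) {k : Fin n} {t : ℕ}
    (h : aEnd hd (pts k) r + t * α ≤ x) :
    aEnd hd (pts k) r + t * α ≤ snap hd pts r α x := by
  have hak : aEnd hd (pts k) r ≤ x := by nlinarith [Nat.cast_nonneg (α := ℝ) t]
  have hmem : k ∈ Finset.univ.filter (fun k : Fin n => aEnd hd (pts k) r ≤ x) := by
    simp [hak]
  have hne : (Finset.univ.filter (fun k : Fin n => aEnd hd (pts k) r ≤ x)).Nonempty := ⟨k, hmem⟩
  unfold snap
  rw [dif_pos hne]
  have hle : (t : ℝ) ≤ ⌊(x - aEnd hd (pts k) r) / α⌋₊ := by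
    have : (t : ℝ) ≤ (x - aEnd hd (pts k) r) / α := by
      rw [le_div_iff₀ hα]; linarith
    exact_mod_cast Nat.le_floor (by exact_mod_cast this)
  calc aEnd hd (pts k) r + (t : ℝ) * α
      ≤ aEnd hd (pts k) r + (⌊(x - aEnd hd (pts k) r) / α⌋₊ : ℝ) * α := by
        nlinarith
    _ ≤ _ := Finset.le_sup' (fun k => aEnd hd (pts k) r + (⌊(x - aEnd hd (pts k) r) / α⌋₊ : ℝ) * α) hmem

lemma snap_mem {d n : ℕ} (hd : 0 < d) (pts : Fin n → EuclideanSpace ℝ (Fin d))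
    {r α x : ℝ} {k₀ : Fin n} (h : aEnd hd (pts k₀) r ≤ x) :
    ∃ (k : Fin n) (t : ℕ), snap hd pts r α x = aEnd hd (pts k) r + t * α := by
  have hne : (Finset.univ.filter (fun k : Fin n => aEnd hd (pts k) r ≤ x)).Nonempty :=
    ⟨k₀, by simp [h]⟩
  unfold snap
  rw [dif_pos hne]
  obtain ⟨k, _, hk⟩ := Finset.exists_mem_eq_sup' hne
    (fun k => aEnd hd (pts k) r + (⌊(x - aEnd hd (pts k) r) / α⌋₊ : ℝ) * α)
  exact ⟨k, _, hk⟩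

/-- If `r` is a constrained-feasible radius, then there is a feasible
solution with covering radius `r`, all centers on the x-axis, in which the first
coordinate of every center is of the form `e + t·α` with `e ∈ E(r)` an endpoint and
`t` a nonnegative integer. -/
theorem stmt11 (d n : ℕ) (hd : 0 < d) (hn : 0 < n)
    (pts : Fin n → EuclideanSpace ℝ (Fin d))
    (α : ℝ) (hα : 0 < α) (p q : ℕ) (hp : 1 ≤ p) (hq : 1 ≤ q)
    (r : ℝ) (hfeas : ConstrainedFeasible pts α p q r) :
    ∃ (c : Fin p → EuclideanSpace ℝ (Fin d)) (e : Fin q → EuclideanSpace ℝ (Fin d)),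
      (∀ i, OnAxis (c i)) ∧ (∀ j, OnAxis (e j)) ∧
      (∀ k : Fin n, ∃ i, dist (pts k) (c i) ≤ r) ∧
      (∀ k : Fin n, ∃ j, dist (pts k) (e j) ≤ r) ∧
      (∀ i j, α ≤ dist (c i) (e j)) ∧
      (∀ i, ∃ e₀ ∈ Endpoints hd pts r, ∃ t : ℕ, c i ⟨0, hd⟩ = e₀ + t * α) ∧
      (∀ j, ∃ e₀ ∈ Endpoints hd pts r, ∃ t : ℕ, e j ⟨0, hd⟩ = e₀ + t * α) := by
  classical
  obtain ⟨c, e, hcA, heA, hcC, heC, hsep⟩ := hfeas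
  obtain ⟨i₀, hi₀⟩ := hcC ⟨0, hn⟩
  obtain ⟨j₀, hj₀⟩ := heC ⟨0, hn⟩
  have hr : 0 ≤ r := le_trans dist_nonneg hi₀
  have hdle : ∀ k, distToAxis (pts k) ≤ r := fun k => by
    obtain ⟨i, hi⟩ := hcC k
    exact (cover_forward hd (hcA i) hi).1
  -- replace useless centers by useful ones
  set C : Fin p → EuclideanSpace ℝ (Fin d) :=
    fun i => if ∃ k, dist (pts k) (c i) ≤ r then c i else c i₀ with hCdef
  set E : Fin q → EuclideanSpace ℝ (Fin d) :=
    fun j => if ∃ k, dist (pts k) (e j) ≤ r then e j else e j₀ with hEdef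
  have hCA : ∀ i, OnAxis (C i) := fun i => by
    simp only [hCdef]; split
    · exact hcA i
    · exact hcA i₀
  have hEA : ∀ j, OnAxis (E j) := fun j => by
    simp only [hEdef]; split
    · exact heA j
    · exact heA j₀
  have hCuse : ∀ i, ∃ k, dist (pts k) (C i) ≤ r := fun i => by
    simp only [hCdef]; split
    · assumption
    · exact ⟨⟨0, hn⟩, hi₀⟩
  have hEuse : ∀ j, ∃ k, dist (pts k) (E j) ≤ r := fun j => by
    simp only [hEdef]; split
    · assumption
    · exact ⟨⟨0, hn⟩, hj₀⟩
  have hCcov : ∀ k, ∃ i, dist (pts k) (C i) ≤ r := fun k => by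
    obtain ⟨i, hi⟩ := hcC k
    refine ⟨i, ?_⟩
    simp only [hCdef]; rw [if_pos ⟨k, hi⟩]; exact hi
  have hEcov : ∀ k, ∃ j, dist (pts k) (E j) ≤ r := fun k => by
    obtain ⟨j, hj⟩ := heC k
    refine ⟨j, ?_⟩
    simp only [hEdef]; rw [if_pos ⟨k, hj⟩]; exact hj
  have hsep' : ∀ i j, α ≤ dist (C i) (E j) := fun i j => by
    simp only [hCdef, hEdef]
    split <;> split <;> apply hsep
  -- existence of a left endpoint below each center coordinate
  have hCex : ∀ i, ∃ k, aEnd hd (pts k) r ≤ C i ⟨0, hd⟩ := fun i => by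
    obtain ⟨k, hk⟩ := hCuse i
    exact ⟨k, (cover_forward hd (hCA i) hk).2.1⟩
  have hEex : ∀ j, ∃ k, aEnd hd (pts k) r ≤ E j ⟨0, hd⟩ := fun j => by
    obtain ⟨k, hk⟩ := hEuse j
    exact ⟨k, (cover_forward hd (hEA j) hk).2.1⟩
  -- snapped centers
  refine ⟨fun i => axisPt d (snap hd pts r α (C i ⟨0, hd⟩)),
          fun j => axisPt d (snap hd pts r α (E j ⟨0, hd⟩)),
          fun i => axisPt_onAxis _, fun j => axisPt_onAxis _, ?_, ?_, ?_, ?_, ?_⟩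
  · -- red coverage
    intro k
    obtain ⟨i, hi⟩ := hCcov k
    obtain ⟨h1, h2, h3⟩ := cover_forward hd (hCA i) hi
    refine ⟨i, cover_backward hd (axisPt_onAxis _) hr h1 ?_ ?_⟩
    · beta_reduce; rw [axisPt_zero]
      have := le_snap hd pts hα (k := k) (t := 0)
        (by simpa using h2)
      simpa using this
    · beta_reduce; rw [axisPt_zero]
      exact le_trans (snap_le hd pts hα) h3
  · -- blue coverage
    intro k
    obtain ⟨j, hj⟩ := hEcov k
    obtain ⟨h1, h2, h3⟩ := cover_forward hd (hEA j) hj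
    refine ⟨j, cover_backward hd (axisPt_onAxis _) hr h1 ?_ ?_⟩
    · beta_reduce; rw [axisPt_zero]
      have := le_snap hd pts hα (k := k) (t := 0)
        (by simpa using h2)
      simpa using this
    · beta_reduce; rw [axisPt_zero]
      exact le_trans (snap_le hd pts hα) h3
  · -- separation
    intro i j
    set x := C i ⟨0, hd⟩ with hx
    set y := E j ⟨0, hd⟩ with hy
    beta_reduce
    rw [dist_onAxis_eq hd (axisPt_onAxis _) (axisPt_onAxis _), axisPt_zero, axisPt_zero]
    have hxy : α ≤ |x - y| := by
      have := hsep' i j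
      rwa [dist_onAxis_eq hd (hCA i) (hEA j)] at this
    rcases le_abs.mp hxy with hcase | hcase
    · -- x ≥ y + α
      obtain ⟨k₀, hk₀⟩ := hEex j
      obtain ⟨k, t, hkt⟩ := snap_mem hd pts (α := α) hk₀
      have hsy : snap hd pts r α y ≤ y := snap_le hd pts hα
      have hle : aEnd hd (pts k) r + ((t + 1 : ℕ) : ℝ) * α ≤ x := by
        push_cast
        have : aEnd hd (pts k) r + t * α ≤ y := hkt ▸ hsy
        linarith
      have := le_snap hd pts hα hle
      have hfin : snap hd pts r α y + α ≤ snap hd pts r α x := by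
        rw [hkt]
        push_cast at this ⊢
        linarith
      calc α ≤ snap hd pts r α x - snap hd pts r α y := by linarith
        _ ≤ |snap hd pts r α x - snap hd pts r α y| := le_abs_self _
    · -- y ≥ x + α
      obtain ⟨k₀, hk₀⟩ := hCex i
      obtain ⟨k, t, hkt⟩ := snap_mem hd pts (α := α) hk₀
      have hsx : snap hd pts r α x ≤ x := snap_le hd pts hα
      have hle : aEnd hd (pts k) r + ((t + 1 : ℕ) : ℝ) * α ≤ y := by
        push_cast
        have : aEnd hd (pts k) r + t * α ≤ x := hkt ▸ hsx
        linarith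
      have := le_snap hd pts hα hle
      have hfin : snap hd pts r α x + α ≤ snap hd pts r α y := by
        rw [hkt]
        push_cast at this ⊢
        linarith
      calc α ≤ -(snap hd pts r α x - snap hd pts r α y) := by linarith
        _ ≤ |snap hd pts r α x - snap hd pts r α y| := neg_le_abs _
  · -- red grid form
    intro i
    obtain ⟨k₀, hk₀⟩ := hCex i
    obtain ⟨k, t, hkt⟩ := snap_mem hd pts (α := α) hk₀
    exact ⟨aEnd hd (pts k) r, ⟨k, hdle k, Or.inl rfl⟩, t, by beta_reduce; rw [axisPt_zero]; exact hkt⟩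
  · -- blue grid form
    intro j
    obtain ⟨k₀, hk₀⟩ := hEex j
    obtain ⟨k, t, hkt⟩ := snap_mem hd pts (α := α) hk₀
    exact ⟨aEnd hd (pts k) r, ⟨k, hdle k, Or.inl rfl⟩, t, by beta_reduce; rw [axisPt_zero]; exact hkt⟩
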